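/- Let C be a nondegenerate closed class of B-decision tables with |B| = k ≥ 2 and I(C) < +∞. Then for every table T ∈ C with cl(T) ≥ 2, R(T) ≥ cl(T)^{1/I(C)} / k². -/

import Mathlib

open scoped Classical

/-- A `B`-decision table: `dim` columns, rows are pairwise distinct tuples
from `B^dim` (a `Finset`), each row labeled by a decision `dec r : ℕ`. -/
structure Table (B : Type) [Fintype B] [DecidableEq B] where
  dim : ℕ
  rows : Finset (Fin dim → B)
  dec : (Fin dim → B) → ℕ

variable {B : Type} [Fintype B] [DecidableEq B]

/-- number of rows N(T) -/
def Table.N (T : Table B) : ℕ := T.rows.card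

/-- number of decision classes cl(T) -/
def Table.cl (T : Table B) : ℕ := (T.rows.image T.dec).card

/-- `T' ∈ [T]`: `T'` is obtained from `T` by removing columns (keeping an
order-preserving selection `φ` of columns), merging equal rows, and changing
decisions arbitrarily. -/
def SubTable (T T' : Table B) : Prop :=
  ∃ φ : Fin T'.dim → Fin T.dim, StrictMono φ ∧
    T'.rows = T.rows.image (fun r => r ∘ φ)

/-- closed class: C = ⋃_{T ∈ C} [T] -/
def IsClosedClass (C : Set (Table B)) : Prop :=
  ∀ T ∈ C, ∀ T', SubTable T T' → T' ∈ C

/-- nondegenerate: number of rows of tables in C is unbounded -/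
def Nondegenerate (C : Set (Table B)) : Prop :=
  ∀ m : ℕ, ∃ T ∈ C, m ≤ T.N

/-- a test: a set of columns separating any two rows with different decisions -/
def IsTest (T : Table B) (S : Finset (Fin T.dim)) : Prop :=
  ∀ r ∈ T.rows, ∀ r' ∈ T.rows, T.dec r ≠ T.dec r' → ∃ i ∈ S, r i ≠ r' i

/-- a reduct: a test no proper subset of which is a test -/
def IsReduct (T : Table B) (S : Finset (Fin T.dim)) : Prop :=
  IsTest T S ∧ ∀ S' ⊂ S, ¬ IsTest T S'

/-- R(T): minimum cardinality of a reduct for T -/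
noncomputable def R (T : Table B) : ℕ :=
  sInf {m | ∃ S : Finset (Fin T.dim), IsReduct T S ∧ S.card = m}

/-- quasicomplete: rows contain a product of two-element subsets of B -/
def Quasicomplete (T : Table B) : Prop :=
  ∃ Bs : Fin T.dim → Finset B, (∀ i, (Bs i).card = 2) ∧
    ∀ r : Fin T.dim → B, (∀ i, r i ∈ Bs i) → r ∈ T.rows

/-- I(T): maximum dimension of a quasicomplete table in [T] -/
noncomputable def Ival (T : Table B) : ℕ :=
  sSup {d | ∃ T', SubTable T T' ∧ Quasicomplete T' ∧ T'.dim = d}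

/-- N_C(n) = max { N(T) : T ∈ C, dim T ≤ n } -/
noncomputable def NC (C : Set (Table B)) (n : ℕ) : ℕ :=
  sSup {m | ∃ T ∈ C, T.dim ≤ n ∧ T.N = m}

set_option linter.unusedSectionVars false


def AShatters {α : Type} (A : Finset (α → B)) (J : Finset α) : Prop :=
  ∃ Bs : α → Finset B, (∀ i ∈ J, (Bs i).card = 2) ∧
    ∀ f : α → B, (∀ i ∈ J, f i ∈ Bs i) → ∃ g ∈ A, ∀ i ∈ J, g i = f i

def phi (c n q : ℕ) : ℕ := ∑ i ∈ Finset.range (q+1), n.choose i * c^i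

lemma one_le_phi (c n q : ℕ) : 1 ≤ phi c n q := by
  unfold phi
  calc 1 = n.choose 0 * c^0 := by simp
  _ ≤ _ := Finset.single_le_sum (f := fun i => n.choose i * c^i)
      (fun i _ => Nat.zero_le _) (Finset.mem_range.mpr (Nat.succ_pos q))

lemma phi_rec (c n q : ℕ) : phi c (n+1) (q+1) = phi c n (q+1) + c * phi c n q := by
  unfold phi
  rw [Finset.sum_range_succ' (fun i => (n+1).choose i * c^i),
      Finset.sum_range_succ' (fun i => n.choose i * c^i), Finset.mul_sum]
  simp only [Nat.choose_succ_succ, add_mul, Nat.choose_zero_right, pow_zero, mul_one,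
    Finset.sum_add_distrib]
  have : ∀ i ∈ Finset.range (q+1), c * (n.choose i * c^i) = n.choose i * c^(i+1) := by
    intro i _; ring
  rw [Finset.sum_congr rfl this]
  simp only [Nat.succ_eq_add_one]
  omega

lemma sub_one_le_choose_two (n : ℕ) : n - 1 ≤ n.choose 2 := by
  induction n with
  | zero => simp
  | succ m ih =>
    rw [Nat.choose_succ_succ]
    have : m.choose 1 = m := Nat.choose_one_right m
    omega

lemma card_le_one_aux {α : Type} [DecidableEq α] (b₀ : B) (s : Finset α)
    (A : Finset (α → B))
    (hsup : ∀ f ∈ A, ∀ i, i ∉ s → f i = b₀)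
    (hsh : ∀ J ⊆ s, AShatters A J → J.card ≤ 0) :
    A.card ≤ 1 := by
  by_contra h
  push_neg at h
  obtain ⟨f, hf, g, hg, hfg⟩ := Finset.one_lt_card.mp h
  have hex : ∃ i ∈ s, f i ≠ g i := by
    by_contra hall
    push_neg at hall
    refine hfg (funext fun i => ?_)
    by_cases hi : i ∈ s
    · exact hall i hi
    · rw [hsup f hf i hi, hsup g hg i hi]
  obtain ⟨i, his, hne⟩ := hex
  have hshat : AShatters A {i} := by
    refine ⟨fun _ => {f i, g i}, fun j _ => Finset.card_pair hne, fun h hh => ?_⟩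
    have hmem := hh i (Finset.mem_singleton_self i)
    rw [Finset.mem_insert, Finset.mem_singleton] at hmem
    rcases hmem with h1 | h2
    · exact ⟨f, hf, fun j hj => by rw [Finset.mem_singleton] at hj; subst hj; rw [h1]⟩
    · exact ⟨g, hg, fun j hj => by rw [Finset.mem_singleton] at hj; subst hj; rw [h2]⟩
  have := hsh {i} (Finset.singleton_subset_iff.mpr his) hshat
  simp at this

lemma key_lemma {α : Type} [DecidableEq α] (b₀ : B) (s : Finset α) :
    ∀ (q : ℕ) (A : Finset (α → B)),
    (∀ f ∈ A, ∀ i, i ∉ s → f i = b₀) →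
    (∀ J ⊆ s, AShatters A J → J.card ≤ q) →
    A.card ≤ phi ((Fintype.card B).choose 2) s.card q := by
  induction s using Finset.induction_on with
  | empty =>
    intro q A hsup hsh
    exact le_trans (card_le_one_aux b₀ ∅ A hsup (fun J hJ _ => by
      simp [Finset.subset_empty.mp hJ])) (one_le_phi _ _ _)
  | @insert a s' ha ih =>
    intro q A hsup hsh
    match q with
    | 0 =>
      exact le_trans (card_le_one_aux b₀ _ A hsup hsh) (one_le_phi _ _ _)
    | q' + 1 =>
      set c := (Fintype.card B).choose 2 with hc
      set A' := A.image (fun f => Function.update f a b₀) with hA'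
      set fib := fun g => A.filter (fun f => Function.update f a b₀ = g) with hfib
      set V := fun g => (fib g).image (fun f => f a) with hV
      -- basic facts
      have hfib_eq : ∀ g, ∀ f ∈ fib g, f = Function.update g a (f a) := by
        intro g f hf
        have h1 : Function.update f a b₀ = g := (Finset.mem_filter.mp hf).2
        rw [← h1, Function.update_idem, Function.update_eq_self]
      have hA'val : ∀ g ∈ A', g a = b₀ := by
        intro g hg
        obtain ⟨f, _, rfl⟩ := Finset.mem_image.mp hg
        simp
      have hVmem : ∀ g, ∀ x, x ∈ V g ↔ Function.update g a x ∈ A ∧ Function.update g a x ∈ fib g := by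
        intro g x
        constructor
        · intro hx
          obtain ⟨f, hf, rfl⟩ := Finset.mem_image.mp hx
          rw [← hfib_eq g f hf]
          exact ⟨(Finset.mem_filter.mp hf).1, hf⟩
        · intro ⟨_, h2⟩
          exact Finset.mem_image.mpr ⟨_, h2, by simp⟩
      -- card A = sum of fibers
      have hcard : A.card = ∑ g ∈ A', (fib g).card := Finset.card_eq_sum_card_image _ _
      have hfibV : ∀ g, (fib g).card = (V g).card := by
        intro g
        rw [hV]
        refine (Finset.card_image_of_injOn ?_).symm
        intro f hf f' hf' hxy
        have h1 := hfib_eq g f (Finset.mem_coe.mp hf)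
        have h2 := hfib_eq g f' (Finset.mem_coe.mp hf')
        simp only at hxy
        rw [h1, h2, hxy]
      have hVpos : ∀ g ∈ A', 1 ≤ (V g).card := by
        intro g hg
        obtain ⟨f, hf, rfl⟩ := Finset.mem_image.mp hg
        refine Finset.card_pos.mpr ⟨f a, ?_⟩
        exact Finset.mem_image.mpr ⟨f, Finset.mem_filter.mpr ⟨hf, rfl⟩, rfl⟩
      have hsplit : A.card = A'.card + ∑ g ∈ A', ((V g).card - 1) := by
        rw [hcard, Finset.sum_congr rfl (fun g _ => hfibV g)]
        rw [Finset.card_eq_sum_ones A', ← Finset.sum_add_distrib]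
        refine Finset.sum_congr rfl (fun g hg => ?_)
        have := hVpos g hg
        omega
      set pairs := (Finset.univ : Finset B).powersetCard 2 with hpairs
      have hpairs_card : pairs.card = c := by
        rw [hpairs, Finset.card_powersetCard, Finset.card_univ]
      have hstep1 : ∀ g, (V g).card - 1 ≤ (pairs.filter (fun P => P ⊆ V g)).card := by
        intro g
        have h1 : (V g).card - 1 ≤ (V g).card.choose 2 := sub_one_le_choose_two _
        have h2 : ((V g).powersetCard 2).card = (V g).card.choose 2 :=
          Finset.card_powersetCard _ _
        have h3 : (V g).powersetCard 2 = pairs.filter (fun P => P ⊆ V g) := by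
          ext P
          simp only [hpairs, Finset.mem_powersetCard, Finset.mem_filter]
          constructor
          · intro ⟨hPV, hP2⟩; exact ⟨⟨Finset.subset_univ _, hP2⟩, hPV⟩
          · intro ⟨⟨_, hP2⟩, hPV⟩; exact ⟨hPV, hP2⟩
        rw [← h3, h2]
        exact h1
      have hsum2 : ∑ g ∈ A', ((V g).card - 1) ≤
          ∑ P ∈ pairs, (A'.filter (fun g => P ⊆ V g)).card := by
        calc ∑ g ∈ A', ((V g).card - 1)
            ≤ ∑ g ∈ A', (pairs.filter (fun P => P ⊆ V g)).card :=
              Finset.sum_le_sum (fun g _ => hstep1 g)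
          _ = ∑ g ∈ A', ∑ P ∈ pairs, (if P ⊆ V g then 1 else 0) := by
              refine Finset.sum_congr rfl (fun g _ => ?_); rw [Finset.card_filter]
          _ = ∑ P ∈ pairs, ∑ g ∈ A', (if P ⊆ V g then 1 else 0) := Finset.sum_comm
          _ = ∑ P ∈ pairs, (A'.filter (fun g => P ⊆ V g)).card := by
              refine Finset.sum_congr rfl (fun P _ => ?_); rw [Finset.card_filter]
      have hA'sup : ∀ g ∈ A', ∀ i, i ∉ s' → g i = b₀ := by
        intro g hg i hi
        obtain ⟨f, hf, rfl⟩ := Finset.mem_image.mp hg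
        by_cases hia : i = a
        · subst hia; simp
        · rw [Function.update_of_ne hia]
          exact hsup f hf i (by simp [Finset.mem_insert, hia, hi])
      have hA'sh : ∀ J ⊆ s', AShatters A' J → J.card ≤ q' + 1 := by
        rintro J hJ ⟨Bs, hBs, hw⟩
        refine hsh J (hJ.trans (Finset.subset_insert a s')) ⟨Bs, hBs, ?_⟩
        intro f hfmem
        obtain ⟨g, hg, hagree⟩ := hw f hfmem
        obtain ⟨f', hf', rfl⟩ := Finset.mem_image.mp hg
        refine ⟨f', hf', fun i hi => ?_⟩
        have hia : i ≠ a := fun h => ha (h ▸ hJ hi)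
        have h5 := hagree i hi
        rwa [Function.update_of_ne hia] at h5
      have hbound1 : A'.card ≤ phi c s'.card (q'+1) := ih (q'+1) A' hA'sup hA'sh
      have hbound2 : ∀ P ∈ pairs, (A'.filter (fun g => P ⊆ V g)).card ≤ phi c s'.card q' := by
        intro P hP
        have hPcard : P.card = 2 := (Finset.mem_powersetCard.mp hP).2
        refine ih q' _ (fun g hg i hi => hA'sup g (Finset.mem_of_mem_filter g hg) i hi) ?_
        rintro J hJ ⟨Bs, hBs, hw⟩
        have haJ : a ∉ J := fun h => ha (hJ h)
        have hshat : AShatters A (insert a J) := by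
          refine ⟨fun i => if i = a then P else Bs i, ?_, ?_⟩
          · intro i hi
            rcases Finset.mem_insert.mp hi with rfl | hiJ
            · simp [hPcard]
            · have hne : i ≠ a := fun h => haJ (h ▸ hiJ)
              simp only [if_neg hne]; exact hBs i hiJ
          · intro f hfmem
            have hfJ : ∀ i ∈ J, f i ∈ Bs i := by
              intro i hi
              have hne : i ≠ a := fun h => haJ (h ▸ hi)
              have h6 := hfmem i (Finset.mem_insert_of_mem hi)
              simpa [hne] using h6
            obtain ⟨g, hg, hagree⟩ := hw f hfJ
            have hgfilter := Finset.mem_filter.mp hg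
            have hfa : f a ∈ P := by
              have h7 := hfmem a (Finset.mem_insert_self a J)
              simpa using h7
            have hfaV : f a ∈ V g := hgfilter.2 hfa
            have hmem := ((hVmem g (f a)).mp hfaV).1
            refine ⟨Function.update g a (f a), hmem, fun i hi => ?_⟩
            rcases Finset.mem_insert.mp hi with rfl | hiJ
            · simp
            · have hne : i ≠ a := fun h => haJ (h ▸ hiJ)
              rw [Function.update_of_ne hne]
              exact hagree i hiJ
        have h8 := hsh (insert a J) (Finset.insert_subset_insert a hJ) hshat
        rwa [Finset.card_insert_of_notMem haJ, Nat.add_le_add_iff_right] at h8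
      have hsum3 : ∑ P ∈ pairs, (A'.filter (fun g => P ⊆ V g)).card ≤
          c * phi c s'.card q' := by
        calc ∑ P ∈ pairs, (A'.filter (fun g => P ⊆ V g)).card
            ≤ ∑ _P ∈ pairs, phi c s'.card q' := Finset.sum_le_sum hbound2
          _ = pairs.card * phi c s'.card q' := by rw [Finset.sum_const, smul_eq_mul]
          _ = c * phi c s'.card q' := by rw [hpairs_card]
      rw [Finset.card_insert_of_notMem ha, phi_rec]
      omega

lemma phi_le (k n q : ℕ) (hk : 2 ≤ k) (hn : 1 ≤ n) :
    phi (k.choose 2) n q ≤ (k^2 * n)^q := by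
  set c := k.choose 2 with hc
  have hc1 : 1 ≤ c := Nat.choose_pos hk
  have hnc : 1 ≤ n * c := Nat.one_le_iff_ne_zero.mpr (by positivity)
  have h1 : ∀ i ∈ Finset.range (q+1), n.choose i * c^i ≤ (n*c)^q := by
    intro i hi
    calc n.choose i * c^i ≤ n^i * c^i :=
          Nat.mul_le_mul_right _ (Nat.choose_le_pow n i)
      _ = (n*c)^i := (mul_pow n c i).symm
      _ ≤ (n*c)^q := Nat.pow_le_pow_right hnc (by
          have := Finset.mem_range.mp hi; omega)
  have h2c : 2 * c ≤ k^2 := by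
    have h3 : c = k * (k-1) / 2 := Nat.choose_two_right k
    have h4 : k * (k-1) / 2 * 2 ≤ k * (k-1) := Nat.div_mul_le_self _ 2
    have h5 : k * (k-1) ≤ k * k := Nat.mul_le_mul_left k (by omega)
    have : k^2 = k * k := sq k
    omega
  calc phi c n q ≤ ∑ _i ∈ Finset.range (q+1), (n*c)^q := Finset.sum_le_sum h1
    _ = (q+1) * (n*c)^q := by rw [Finset.sum_const, Finset.card_range, smul_eq_mul]
    _ ≤ 2^q * (n*c)^q := Nat.mul_le_mul_right _ (Nat.lt_two_pow_self (n := q))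
    _ = (2*(n*c))^q := by rw [mul_pow 2 (n*c) q, mul_pow n c q]
    _ ≤ (k^2 * n)^q := Nat.pow_le_pow_left (by
        calc 2*(n*c) = n * (2*c) := by ring
          _ ≤ n * k^2 := Nat.mul_le_mul_left n h2c
          _ = k^2 * n := Nat.mul_comm n _) q

section Glue
variable {B : Type} [Fintype B] [DecidableEq B]

lemma shatter_card_le [Nonempty B] (Cl : Set (Table B)) (hC : IsClosedClass Cl) (q : ℕ)
    (hub : ∀ T ∈ Cl, Quasicomplete T → T.dim ≤ q)
    (T' : Table B) (hT' : T' ∈ Cl) (J : Finset (Fin T'.dim))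
    (hsh : AShatters T'.rows J) : J.card ≤ q := by
  obtain ⟨Bs, hBs, hw⟩ := hsh
  set φ : Fin J.card → Fin T'.dim := ⇑(J.orderEmbOfFin rfl) with hφ
  set T'' : Table B := ⟨J.card, T'.rows.image (fun r => r ∘ φ), fun _ => 0⟩ with hT''
  have hmem : T'' ∈ Cl := hC T' hT' T'' ⟨φ, (J.orderEmbOfFin rfl).strictMono, rfl⟩
  have hφmem : ∀ j, φ j ∈ J := fun j => J.orderEmbOfFin_mem rfl j
  have hiso : ∀ (i : Fin T'.dim) (h : i ∈ J), φ ((J.orderIsoOfFin rfl).symm ⟨i, h⟩) = i := by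
    intro i h
    have h2 := J.coe_orderIsoOfFin_apply rfl ((J.orderIsoOfFin rfl).symm ⟨i, h⟩)
    rw [OrderIso.apply_symm_apply] at h2
    exact h2.symm
  refine hub T'' hmem ⟨fun j => Bs (φ j), fun j => hBs _ (hφmem j), ?_⟩
  intro r hr
  set f : Fin T'.dim → B := fun i =>
    if h : i ∈ J then r ((J.orderIsoOfFin rfl).symm ⟨i, h⟩) else Classical.arbitrary B with hf
  have hfBs : ∀ i ∈ J, f i ∈ Bs i := by
    intro i hi
    have h3 : f i = r ((J.orderIsoOfFin rfl).symm ⟨i, hi⟩) := by rw [hf]; exact dif_pos hi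
    rw [h3]
    have h4 := hr ((J.orderIsoOfFin rfl).symm ⟨i, hi⟩)
    simpa [hiso i hi] using h4
  obtain ⟨g, hg, hagree⟩ := hw f hfBs
  have : g ∘ φ = r := by
    funext j
    have h5 : f (φ j) = r j := by
      rw [hf]
      have hm := hφmem j
      have h6 : (⟨φ j, hm⟩ : {x // x ∈ J}) = J.orderIsoOfFin rfl j :=
        Subtype.ext (J.coe_orderIsoOfFin_apply rfl j).symm
      simp only [dif_pos hm]
      rw [h6, OrderIso.symm_apply_apply]
    rw [Function.comp_apply, hagree (φ j) (hφmem j), h5]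
  exact Finset.mem_image.mpr ⟨g, hg, this⟩

lemma one_le_q (Cl : Set (Table B)) (hC : IsClosedClass Cl) (hnd : Nondegenerate Cl)
    (q : ℕ) (hub : ∀ T ∈ Cl, Quasicomplete T → T.dim ≤ q) : 1 ≤ q := by
  obtain ⟨T₀, hT₀, hN⟩ := hnd 2
  have h2 : 1 < T₀.rows.card := hN
  obtain ⟨f, hf, g, hg, hfg⟩ := Finset.one_lt_card.mp h2
  obtain ⟨i, hi⟩ : ∃ i, f i ≠ g i := by
    by_contra hcon; push_neg at hcon; exact hfg (funext hcon)
  set φ : Fin 1 → Fin T₀.dim := fun _ => i with hφ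
  set T₁ : Table B := ⟨1, T₀.rows.image (fun r => r ∘ φ), fun _ => 0⟩ with hT₁
  have hmono : StrictMono φ := by
    intro a b hab
    rw [Subsingleton.elim a b] at hab
    exact absurd hab (lt_irrefl b)
  have hmem : T₁ ∈ Cl := hC T₀ hT₀ T₁ ⟨φ, hmono, rfl⟩
  have hquasi : Quasicomplete T₁ := by
    refine ⟨fun _ => {f i, g i}, fun _ => Finset.card_pair hi, ?_⟩
    intro r hr
    have h0 := hr 0
    rw [Finset.mem_insert, Finset.mem_singleton] at h0
    rcases h0 with h1 | h1
    · exact Finset.mem_image.mpr ⟨f, hf, funext fun j => by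
        rw [Subsingleton.elim j 0]; exact h1.symm⟩
    · exact Finset.mem_image.mpr ⟨g, hg, funext fun j => by
        rw [Subsingleton.elim j 0]; exact h1.symm⟩
  exact hub T₁ hmem hquasi

end Glue


theorem stmt_11 (C : Set (Table B)) (hC : IsClosedClass C) (hnd : Nondegenerate C)
    (k : ℕ) (hk : Fintype.card B = k) (hk2 : 2 ≤ k)
    (q : ℕ) (hub : ∀ T ∈ C, Quasicomplete T → T.dim ≤ q)
    (hattain : ∃ T ∈ C, Quasicomplete T ∧ T.dim = q)
    (T : Table B) (hT : T ∈ C) (hcl : 2 ≤ T.cl) :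
    (T.cl : ℝ) ^ ((1 : ℝ) / q) / (k ^ 2 : ℝ) ≤ (R T : ℝ) := by
  haveI hB : Nonempty B := by
    rw [← Fintype.card_pos_iff]; omega
  have b₀ : B := Classical.arbitrary B
  have hq1 : 1 ≤ q := one_le_q C hC hnd q hub
  have huniv_test : IsTest T Finset.univ := by
    intro r hr r' hr' hdec
    have hne : r ≠ r' := fun h => hdec (by rw [h])
    obtain ⟨i, hi⟩ : ∃ i, r i ≠ r' i := by
      by_contra hcon; push_neg at hcon; exact hne (funext hcon)
    exact ⟨i, Finset.mem_univ i, hi⟩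
  have htne : {m | ∃ S : Finset (Fin T.dim), IsTest T S ∧ S.card = m}.Nonempty :=
    ⟨Finset.univ.card, Finset.univ, huniv_test, rfl⟩
  obtain ⟨S₀, hS₀test, hS₀card⟩ := Nat.sInf_mem htne
  have hS₀red : IsReduct T S₀ := by
    refine ⟨hS₀test, fun S' hS' hS'test => ?_⟩
    have h1 : sInf {m | ∃ S : Finset (Fin T.dim), IsTest T S ∧ S.card = m} ≤ S'.card :=
      Nat.sInf_le ⟨S', hS'test, rfl⟩
    have h2 : S'.card < S₀.card := Finset.card_lt_card hS'
    omega
  have hredne : {m | ∃ S : Finset (Fin T.dim), IsReduct T S ∧ S.card = m}.Nonempty :=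
    ⟨S₀.card, S₀, hS₀red, rfl⟩
  obtain ⟨S, hSred, hScard'⟩ := Nat.sInf_mem hredne
  have hRdef : R T = sInf {m | ∃ S : Finset (Fin T.dim), IsReduct T S ∧ S.card = m} := rfl
  rw [← hRdef] at hScard'
  have hStest : IsTest T S := hSred.1
  obtain ⟨d₁, hd₁, d₂, hd₂, hdd⟩ := Finset.one_lt_card.mp (hcl : 1 < (T.rows.image T.dec).card)
  obtain ⟨r₁, hr₁, hdec₁⟩ := Finset.mem_image.mp hd₁
  obtain ⟨r₂, hr₂, hdec₂⟩ := Finset.mem_image.mp hd₂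
  have hS1 : 1 ≤ S.card := by
    rcases Nat.eq_zero_or_pos S.card with h0 | h
    · exfalso
      obtain ⟨i, hiS, _⟩ := hStest r₁ hr₁ r₂ hr₂ (by rw [hdec₁, hdec₂]; exact hdd)
      rw [Finset.card_eq_zero.mp h0] at hiS
      exact absurd hiS (Finset.notMem_empty i)
    · exact h
  set φ : Fin S.card → Fin T.dim := ⇑(S.orderEmbOfFin rfl) with hφ
  set T' : Table B := ⟨S.card, T.rows.image (fun r => r ∘ φ), fun _ => 0⟩ with hT'
  have hT'C : T' ∈ C := hC T hT T' ⟨φ, (S.orderEmbOfFin rfl).strictMono, rfl⟩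
  have hφsur : ∀ i ∈ S, ∃ j, φ j = i := by
    intro i hi
    refine ⟨(S.orderIsoOfFin rfl).symm ⟨i, hi⟩, ?_⟩
    have h2 := S.coe_orderIsoOfFin_apply rfl ((S.orderIsoOfFin rfl).symm ⟨i, hi⟩)
    rw [OrderIso.apply_symm_apply] at h2
    exact h2.symm
  set F : ℕ → (Fin T.dim → B) := fun d =>
    if h : ∃ r, r ∈ T.rows ∧ T.dec r = d then h.choose else fun _ => b₀ with hF
  have hFspec : ∀ d ∈ T.rows.image T.dec, F d ∈ T.rows ∧ T.dec (F d) = d := by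
    intro d hd
    obtain ⟨r, hr, he⟩ := Finset.mem_image.mp hd
    have h : ∃ r, r ∈ T.rows ∧ T.dec r = d := ⟨r, hr, he⟩
    rw [hF]; simp only [dif_pos h]
    exact h.choose_spec
  have hclle : T.cl ≤ T'.rows.card := by
    rw [Table.cl]
    refine Finset.card_le_card_of_injOn (fun d => F d ∘ φ) ?_ ?_
    · intro d hd
      exact Finset.mem_image.mpr ⟨F d, (hFspec d hd).1, rfl⟩
    · intro d hd d' hd' heq
      by_contra hne
      obtain ⟨i, hiS, hneq⟩ := hStest (F d) (hFspec d (Finset.mem_coe.mp hd)).1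
        (F d') (hFspec d' (Finset.mem_coe.mp hd')).1
        (by rw [(hFspec d (Finset.mem_coe.mp hd)).2, (hFspec d' (Finset.mem_coe.mp hd')).2]
            exact hne)
      obtain ⟨j, hj⟩ := hφsur i hiS
      refine hneq ?_
      have h9 := congrFun heq j
      simp only at h9
      rw [← hj]
      exact h9
  have hbound : T'.rows.card ≤ phi ((Fintype.card B).choose 2) S.card q := by
    have h := key_lemma b₀ (Finset.univ : Finset (Fin S.card)) q T'.rows
      (fun f _ i hi => absurd (Finset.mem_univ i) hi)
      (fun J _ hsh => shatter_card_le C hC q hub T' hT'C J hsh)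
    simpa using h
  have hphile : phi ((Fintype.card B).choose 2) S.card q ≤ (k^2 * S.card)^q := by
    rw [hk]; exact phi_le k S.card q hk2 hS1
  have hnat : T.cl ≤ (k^2 * R T)^q := by
    rw [← hScard']
    exact le_trans hclle (le_trans hbound hphile)
  have hR1 : 1 ≤ R T := hScard' ▸ hS1
  have hq0 : (q:ℝ) ≠ 0 := by
    have : q ≠ 0 := by omega
    exact_mod_cast this
  have hk0 : (0:ℝ) < (k:ℝ) := by exact_mod_cast (by omega : 0 < k)
  have hR0 : (0:ℝ) < (R T : ℝ) := by exact_mod_cast hR1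
  have hy : (0:ℝ) < (k:ℝ)^2 * (R T:ℝ) := by positivity
  have hcast : (T.cl : ℝ) ≤ ((k:ℝ)^2 * (R T:ℝ))^(q:ℕ) := by exact_mod_cast hnat
  have hrpow : (T.cl : ℝ) ^ ((1:ℝ)/q) ≤ (k:ℝ)^2 * (R T:ℝ) := by
    have h1 : (T.cl:ℝ) ^ ((1:ℝ)/q) ≤ (((k:ℝ)^2*(R T:ℝ))^(q:ℕ)) ^ ((1:ℝ)/q) :=
      Real.rpow_le_rpow (by positivity) hcast (by positivity)
    rwa [← Real.rpow_natCast ((k:ℝ)^2*(R T:ℝ)) q, ← Real.rpow_mul (le_of_lt hy),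
      mul_one_div, div_self hq0, Real.rpow_one] at h1
  rw [div_le_iff₀ (by positivity : (0:ℝ) < (k:ℝ)^2)]
  exact le_of_le_of_eq hrpow (mul_comm _ _)
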